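/- Let a group G admit an isometric, metrically proper action on a proper geodesic metric space (X,d) with the contracting property and with basepoint o. Then G contains a unique maximal finite normal subgroup E(G) (i.e. E(G) is a finite normal subgroup containing every finite normal subgroup of G), and moreover E(G) equals the intersection, over all contracting elements f ∈ G, of the subgroups E(f) = {g ∈ G : d_H(⟨f⟩·o, g·⟨f⟩·o) < ∞}, and also equals the intersection, over all contracting elements f ∈ G, of the subgroups E^+(f) = {g ∈ G : g f^m g^{-1} = f^m for some m > 0}. -/

import Mathlib

open Metric

/-- A geodesic parametrisation from `x` to `y`, with image `s`: an isometric embedding of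
the interval `[0, dist x y]` sending the endpoints to `x` and `y`. -/
def IsGeodesicFromTo {X : Type*} [MetricSpace X] (s : Set X) (x y : X) : Prop :=
  ∃ γ : ℝ → X,
    (∀ u ∈ Set.Icc (0 : ℝ) (dist x y), ∀ v ∈ Set.Icc (0 : ℝ) (dist x y),
      dist (γ u) (γ v) = |u - v|) ∧
    γ 0 = x ∧ γ (dist x y) = y ∧ s = γ '' Set.Icc (0 : ℝ) (dist x y)

/-- A geodesic segment: the image of an isometric embedding of a compact real interval. -/
def IsGeodesicSegment {X : Type*} [MetricSpace X] (s : Set X) : Prop :=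
  ∃ x y : X, IsGeodesicFromTo s x y

/-- A metric space is geodesic if any two points are joined by a geodesic segment. -/
def GeodesicSpace (X : Type*) [MetricSpace X] : Prop :=
  ∀ x y : X, ∃ s : Set X, IsGeodesicFromTo s x y

/-- Closest point projection of a point to a subset:
`π_Y(x) = {y ∈ closure Y | d(x,y) = d(x,Y)}`. -/
def projSet {X : Type*} [MetricSpace X] (Y : Set X) (x : X) : Set X :=
  {y ∈ closure Y | dist x y = Metric.infDist x Y}

/-- Closest point projection of a subset `B`: `π_Y(B) = ⋃_{x ∈ B} π_Y(x)`. -/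
def projSetOf {X : Type*} [MetricSpace X] (Y B : Set X) : Set X :=
  ⋃ x ∈ B, projSet Y x

/-- The closed `r`-neighbourhood `N_r(A) = {x | d(x,A) ≤ r}`. -/
def ptNbhd {X : Type*} [MetricSpace X] (r : ℝ) (A : Set X) : Set X :=
  {x | Metric.infDist x A ≤ r}

/-- `Y` is `C`-contracting : for every geodesic segment `s` with `d(s,Y) ≥ C`,
one has `diam (π_Y(s)) ≤ C`. -/
def IsContractingWith {X : Type*} [MetricSpace X] (C : ℝ) (Y : Set X) : Prop :=
  ∀ s : Set X, IsGeodesicSegment s → (∀ x ∈ s, C ≤ Metric.infDist x Y) →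
    ∀ p ∈ projSetOf Y s, ∀ q ∈ projSetOf Y s, dist p q ≤ C

/-- `Y` is contracting if it is `C`-contracting for some `C ≥ 0`. -/
def IsContractingSet {X : Type*} [MetricSpace X] (Y : Set X) : Prop :=
  ∃ C : ℝ, 0 ≤ C ∧ IsContractingWith C Y

/-- `Y` and `Z` have `R`-bounded intersection for some gauge function `R`:
`diam (N_r(Y) ∩ N_r(Z)) ≤ R r` for all `r ≥ 0`. -/
def HasBoundedIntersection {X : Type*} [MetricSpace X] (Y Z : Set X) : Prop :=
  ∃ R : ℝ → ℝ, ∀ r : ℝ, 0 ≤ r →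
    ∀ p ∈ ptNbhd r Y ∩ ptNbhd r Z, ∀ q ∈ ptNbhd r Y ∩ ptNbhd r Z, dist p q ≤ R r

/-- The orbit `⟨g⟩ · o` of the basepoint under the cyclic subgroup generated by `g`. -/
def cyclicOrbit {G X : Type*} [Group G] [MetricSpace X] [MulAction G X] (g : G) (o : X) :
    Set X :=
  Set.range fun n : ℤ => (g ^ n) • o

/-- `g` is a contracting element for the action: the orbit `⟨g⟩ · o` is a contracting
subset and `n ↦ gⁿ • o` is a quasi-isometric embedding of `ℤ`. -/
def IsContractingElement {G X : Type*} [Group G] [MetricSpace X] [MulAction G X]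
    (o : X) (g : G) : Prop :=
  IsContractingSet (cyclicOrbit g o) ∧
    ∃ K c : ℝ, 1 ≤ K ∧ 0 ≤ c ∧ ∀ m n : ℤ,
      |(m : ℝ) - (n : ℝ)| / K - c ≤ dist ((g ^ m) • o) ((g ^ n) • o) ∧
      dist ((g ^ m) • o) ((g ^ n) • o) ≤ K * |(m : ℝ) - (n : ℝ)| + c

/-- Two elements are weakly independent if their cyclic orbits have bounded intersection. -/
def WeaklyIndependent {G X : Type*} [Group G] [MetricSpace X] [MulAction G X]
    (o : X) (g h : G) : Prop :=
  HasBoundedIntersection (cyclicOrbit g o) (cyclicOrbit h o)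

/-- The action of `G` on `X` has the contracting property: there exist two weakly
independent contracting elements. -/
def ContractingProperty (G : Type*) (X : Type*) [Group G] [MetricSpace X] [MulAction G X]
    (o : X) : Prop :=
  ∃ g h : G, IsContractingElement o g ∧ IsContractingElement o h ∧ WeaklyIndependent o g h

/-- Stable translation length `ℓ_d(g) = lim_n d(o, gⁿ • o)/n`; by subadditivity (Fekete's
lemma) the limit exists and equals the infimum below. -/
noncomputable def stableLength {G X : Type*} [Group G] [MetricSpace X] [MulAction G X]
    (o : X) (g : G) : ℝ :=
  ⨅ n : ℕ+, dist o ((g ^ (n : ℕ)) • o) / ((n : ℕ) : ℝ)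

section Helpers

open Metric Set

variable {X : Type*} [MetricSpace X]

namespace ERhelp

lemma contractingWith_mono {C C' : ℝ} {Y : Set X} (h : IsContractingWith C Y)
    (hle : C ≤ C') : IsContractingWith C' Y :=
  fun s hs hfar p hp q hq =>
    (h s hs (fun x hx => le_trans hle (hfar x hx)) p hp q hq).trans hle

lemma projSet_nonempty [ProperSpace X] {Y : Set X} (hY : Y.Nonempty) (x : X) :
    (projSet Y x).Nonempty := by
  obtain ⟨y, hy, hd⟩ := Metric.exists_mem_closure_infDist_eq_dist hY x
  exact ⟨y, hy, hd.symm⟩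

lemma crossing_inf {A B L : ℝ} {f : ℝ → ℝ}
    (hf : ∀ s ∈ Icc A B, ∀ t ∈ Icc A B, f s ≤ f t + |s - t|)
    (hex : ∃ t ∈ Icc A B, f t ≤ L) :
    ∃ u ∈ Icc A B, f u ≤ L ∧ ∀ t ∈ Icc A B, t < u → L < f t := by
  obtain ⟨t₀, ht₀, hft₀⟩ := hex
  set S : Set ℝ := {t | t ∈ Icc A B ∧ f t ≤ L} with hS
  have hSne : S.Nonempty := ⟨t₀, ht₀, hft₀⟩
  have hbdd : BddBelow S := ⟨A, fun t ht => ht.1.1⟩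
  set u := sInf S with hu
  have huA : A ≤ u := le_csInf hSne fun t ht => ht.1.1
  have huB : u ≤ B := le_trans (csInf_le hbdd ⟨ht₀, hft₀⟩) ht₀.2
  have huI : u ∈ Icc A B := ⟨huA, huB⟩
  have hfu : f u ≤ L := by
    by_contra hcon
    push_neg at hcon
    obtain ⟨t, htS, htl⟩ := (csInf_lt_iff hbdd hSne).mp
      (lt_add_of_pos_right u (by linarith : (0:ℝ) < f u - L))
    have h1 : u ≤ t := csInf_le hbdd htS
    have h2 := hf u huI t htS.1
    have habs : |u - t| = t - u := by
      rw [abs_sub_comm]; exact abs_of_nonneg (by linarith)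
    rw [habs] at h2
    have := htS.2
    linarith
  refine ⟨u, huI, hfu, fun t ht htu => ?_⟩
  by_contra hc
  push_neg at hc
  exact absurd (csInf_le hbdd ⟨ht, hc⟩) (not_le.mpr htu)

lemma crossing_sup {A B L : ℝ} {f : ℝ → ℝ}
    (hf : ∀ s ∈ Icc A B, ∀ t ∈ Icc A B, f s ≤ f t + |s - t|)
    (hex : ∃ t ∈ Icc A B, f t ≤ L) :
    ∃ u ∈ Icc A B, f u ≤ L ∧ ∀ t ∈ Icc A B, u < t → L < f t := by
  obtain ⟨t₀, ht₀, hft₀⟩ := hex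
  set S : Set ℝ := {t | t ∈ Icc A B ∧ f t ≤ L} with hS
  have hSne : S.Nonempty := ⟨t₀, ht₀, hft₀⟩
  have hbdd : BddAbove S := ⟨B, fun t ht => ht.1.2⟩
  set u := sSup S with hu
  have huB : u ≤ B := csSup_le hSne fun t ht => ht.1.2
  have huA : A ≤ u := le_trans ht₀.1 (le_csSup hbdd ⟨ht₀, hft₀⟩)
  have huI : u ∈ Icc A B := ⟨huA, huB⟩
  have hfu : f u ≤ L := by
    by_contra hcon
    push_neg at hcon
    obtain ⟨t, htS, htl⟩ := (lt_csSup_iff hbdd hSne).mp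
      (sub_lt_self u (by linarith : (0:ℝ) < f u - L))
    have h1 : t ≤ u := le_csSup hbdd htS
    have h2 := hf u huI t htS.1
    have habs : |u - t| = u - t := abs_of_nonneg (by linarith)
    rw [habs] at h2
    have := htS.2
    linarith
  refine ⟨u, huI, hfu, fun t ht htu => ?_⟩
  by_contra hc
  push_neg at hc
  exact absurd (le_csSup hbdd ⟨ht, hc⟩) (not_le.mpr htu)

lemma isGeodesicFromTo_sub {γ : ℝ → X} {T a b : ℝ}
    (hγ : ∀ u ∈ Icc (0:ℝ) T, ∀ v ∈ Icc (0:ℝ) T, dist (γ u) (γ v) = |u - v|)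
    (h0a : 0 ≤ a) (hab : a ≤ b) (hbT : b ≤ T) :
    IsGeodesicFromTo (γ '' Icc a b) (γ a) (γ b) := by
  have haI : a ∈ Icc (0:ℝ) T := ⟨h0a, le_trans hab hbT⟩
  have hbI : b ∈ Icc (0:ℝ) T := ⟨le_trans h0a hab, hbT⟩
  have hd : dist (γ a) (γ b) = b - a := by
    rw [hγ a haI b hbI, abs_sub_comm]
    exact abs_of_nonneg (by linarith)
  refine ⟨fun w => γ (a + w), ?_, ?_, ?_, ?_⟩
  · intro u hu v hv
    rw [hd] at hu hv
    have hu' : a + u ∈ Icc (0:ℝ) T := ⟨by linarith [hu.1], by linarith [hu.2]⟩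
    have hv' : a + v ∈ Icc (0:ℝ) T := ⟨by linarith [hv.1], by linarith [hv.2]⟩
    rw [hγ _ hu' _ hv']
    congr 1
    ring
  · simp
  · rw [hd]
    norm_num
  · rw [hd]
    have h1 : Icc a b = (fun w => a + w) '' Icc 0 (b - a) := by
      rw [Set.image_const_add_Icc]
      norm_num
    rw [h1, Set.image_image]

lemma contract_apply {C : ℝ} {Y : Set X} (hcon : IsContractingWith C Y)
    {γ : ℝ → X} {T a b : ℝ}
    (hγ : ∀ u ∈ Icc (0:ℝ) T, ∀ v ∈ Icc (0:ℝ) T, dist (γ u) (γ v) = |u - v|)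
    (h0a : 0 ≤ a) (hab : a ≤ b) (hbT : b ≤ T)
    (hfar : ∀ t ∈ Icc a b, C ≤ infDist (γ t) Y)
    {p q : X} {s t : ℝ} (hs : s ∈ Icc a b) (ht : t ∈ Icc a b)
    (hp : p ∈ projSet Y (γ s)) (hq : q ∈ projSet Y (γ t)) :
    dist p q ≤ C := by
  refine hcon (γ '' Icc a b) ⟨γ a, γ b, isGeodesicFromTo_sub hγ h0a hab hbT⟩ ?_ p ?_ q ?_
  · rintro x ⟨w, hw, rfl⟩
    exact hfar w hw
  · exact Set.mem_biUnion (Set.mem_image_of_mem _ hs) hp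
  · exact Set.mem_biUnion (Set.mem_image_of_mem _ ht) hq

end ERhelp

end Helpers
section Helpers2

open Metric Set

variable {X : Type*} [MetricSpace X]

namespace ERhelp

lemma lip_infDist {γ : ℝ → X} {T : ℝ} {Y : Set X}
    (hγ : ∀ u ∈ Icc (0:ℝ) T, ∀ v ∈ Icc (0:ℝ) T, dist (γ u) (γ v) = |u - v|) :
    ∀ s ∈ Icc (0:ℝ) T, ∀ t ∈ Icc (0:ℝ) T,
      infDist (γ s) Y ≤ infDist (γ t) Y + |s - t| := by
  intro s hs t ht
  calc infDist (γ s) Y ≤ infDist (γ t) Y + dist (γ s) (γ t) :=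
        infDist_le_infDist_add_dist
    _ = infDist (γ t) Y + |s - t| := by rw [hγ s hs t ht]

/-- Lemma G': a geodesic whose endpoints are `a`-close to a `C`-contracting set `Y`
stays within `3 max C a + C + 4` of `Y`. -/
lemma geodesic_near [ProperSpace X] {C a : ℝ} {Y : Set X} (hC : 0 ≤ C) (ha : 0 ≤ a)
    (hYne : Y.Nonempty) (hcon : IsContractingWith C Y)
    {γ : ℝ → X} {T : ℝ} (hT : 0 ≤ T)
    (hγ : ∀ u ∈ Icc (0:ℝ) T, ∀ v ∈ Icc (0:ℝ) T, dist (γ u) (γ v) = |u - v|)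
    (h0 : infDist (γ 0) Y ≤ a) (hTe : infDist (γ T) Y ≤ a) :
    ∀ t ∈ Icc (0:ℝ) T, infDist (γ t) Y ≤ 3 * max C a + C + 4 := by

  set T' := max C a with hT'
  have hT'0 : 0 ≤ T' := le_trans hC (le_max_left _ _)
  have hCT' : C ≤ T' := le_max_left _ _
  have haT' : a ≤ T' := le_max_right _ _
  by_contra hcontra
  push_neg at hcontra
  obtain ⟨t₀, ht₀I, ht₀⟩ := hcontra
  have hlip := lip_infDist (Y := Y) hγ
  -- restrict Lipschitz bound to subintervals
  have hsub1 : Icc (0:ℝ) t₀ ⊆ Icc 0 T := Icc_subset_Icc le_rfl ht₀I.2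
  have hsub2 : Icc t₀ T ⊆ Icc 0 T := Icc_subset_Icc ht₀I.1 le_rfl
  obtain ⟨u, huI, hfu, humax⟩ := crossing_sup (A := 0) (B := t₀) (L := T')
    (fun s hs t ht => hlip s (hsub1 hs) t (hsub1 ht))
    ⟨0, ⟨le_rfl, ht₀I.1⟩, le_trans h0 haT'⟩
  obtain ⟨v, hvI, hfv, hvmin⟩ := crossing_inf (A := t₀) (B := T) (L := T')
    (fun s hs t ht => hlip s (hsub2 hs) t (hsub2 ht))
    ⟨T, ⟨ht₀I.2, le_rfl⟩, le_trans hTe haT'⟩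
  have huT : u ∈ Icc (0:ℝ) T := hsub1 huI
  have hvT : v ∈ Icc (0:ℝ) T := hsub2 hvI
  -- f t₀ ≤ f u + (t₀ - u)
  have h1 : infDist (γ t₀) Y ≤ infDist (γ u) Y + (t₀ - u) := by
    have := hlip t₀ ht₀I u huT
    rwa [abs_of_nonneg (by linarith [huI.2] : (0:ℝ) ≤ t₀ - u)] at this
  have h2 : infDist (γ t₀) Y ≤ infDist (γ v) Y + (v - t₀) := by
    have := hlip t₀ ht₀I v hvT
    rwa [abs_of_nonpos (by linarith [hvI.1] : t₀ - v ≤ 0), neg_sub] at this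
  have hu1 : u + 1 ≤ t₀ := by linarith
  have hv1 : t₀ + 1 ≤ v := by linarith
  have hu'I : u + 1 ∈ Icc (0:ℝ) T := ⟨by linarith [huI.1], by linarith [hvI.2]⟩
  have hv'I : v - 1 ∈ Icc (0:ℝ) T := ⟨by linarith [huI.1], by linarith [hvI.2]⟩
  have hfar : ∀ t ∈ Icc (u+1) (v-1), C ≤ infDist (γ t) Y := by
    intro t ht
    rcases le_total t t₀ with hle | hle
    · refine le_trans hCT' (le_of_lt (humax t ⟨by linarith [huI.1, ht.1], hle⟩
        (by linarith [ht.1])))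
    · refine le_trans hCT' (le_of_lt (hvmin t ⟨hle, by linarith [ht.2, hvI.2]⟩
        (by linarith [ht.2])))
  obtain ⟨p, hp⟩ := projSet_nonempty hYne (γ (u+1))
  obtain ⟨q, hq⟩ := projSet_nonempty hYne (γ (v-1))
  have hpq : dist p q ≤ C :=
    contract_apply hcon hγ (by linarith [huI.1] : (0:ℝ) ≤ u + 1)
      (by linarith : u + 1 ≤ v - 1) (by linarith [hvI.2] : v - 1 ≤ T) hfar
      ⟨le_rfl, by linarith⟩ ⟨by linarith, le_rfl⟩ hp hq
  have hfu' : infDist (γ (u+1)) Y ≤ T' + 1 := by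
    have := hlip (u+1) hu'I u huT
    rw [show |u + 1 - u| = 1 by norm_num] at this
    linarith
  have hfv' : infDist (γ (v-1)) Y ≤ T' + 1 := by
    have := hlip (v-1) hv'I v hvT
    rw [show |v - 1 - v| = 1 by rw [show v - 1 - v = -1 by ring]; norm_num] at this
    linarith
  have hdvu : dist (γ (u+1)) (γ (v-1)) = (v-1) - (u+1) := by
    rw [hγ _ hu'I _ hv'I, abs_sub_comm]
    exact abs_of_nonneg (by linarith)
  have hptdist : dist (γ (u+1)) (γ (v-1)) ≤
      infDist (γ (u+1)) Y + dist p q + infDist (γ (v-1)) Y := by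
    calc dist (γ (u+1)) (γ (v-1)) ≤ dist (γ (u+1)) p + dist p (γ (v-1)) :=
          dist_triangle _ _ _
      _ ≤ dist (γ (u+1)) p + dist p q + dist q (γ (v-1)) := by
          linarith [dist_triangle p q (γ (v-1))]
      _ = infDist (γ (u+1)) Y + dist p q + dist (γ (v-1)) q := by
          rw [hp.2, dist_comm q (γ (v-1))]
      _ = infDist (γ (u+1)) Y + dist p q + infDist (γ (v-1)) Y := by rw [hq.2]
  have hlen : (v-1) - (u+1) ≤ 2 * T' + C + 2 := by
    rw [← hdvu]; linarith
  have hft₀ : infDist (γ t₀) Y ≤ infDist (γ (u+1)) Y + (t₀ - (u+1)) := by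
    have := hlip t₀ ht₀I (u+1) hu'I
    rwa [abs_of_nonneg (by linarith : (0:ℝ) ≤ t₀ - (u+1))] at this
  have hend : t₀ - (u+1) ≤ (v-1) - (u+1) := by linarith
  linarith

end ERhelp

end Helpers2
section Helpers3

open Metric Set

variable {X : Type*} [MetricSpace X]

namespace ERhelp

/-- Almost-minimizing points of `Y` seen from a far point `x` are close to
any projection of `x`. -/
lemma near_projection [ProperSpace X] {C ε : ℝ} {Y : Set X} (hC : 0 ≤ C) (hε : 0 ≤ ε)
    (hYne : Y.Nonempty) (hcon : IsContractingWith C Y) (hgeo : GeodesicSpace X)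
    {x w : X} (hw : w ∈ Y) (hdxw : dist x w ≤ infDist x Y + ε)
    (hfar : C + 1 ≤ infDist x Y) {p : X} (hp : p ∈ projSet Y x) :
    dist w p ≤ 3 * C + ε + 2 := by
  obtain ⟨s, γ, hγ, hγ0, hγT, -⟩ := hgeo x w
  set T := dist x w with hTdef
  have hT : 0 ≤ T := dist_nonneg
  have hlip := lip_infDist (Y := Y) (T := T) hγ
  have h0T : (0:ℝ) ∈ Icc (0:ℝ) T := ⟨le_rfl, hT⟩
  have hTT : T ∈ Icc (0:ℝ) T := ⟨hT, le_rfl⟩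
  have hfT : infDist (γ T) Y ≤ C := by
    rw [hγT]
    exact le_trans (by simpa using infDist_le_dist_of_mem (x := w) hw) hC
  obtain ⟨u, huI, hfu, humin⟩ := crossing_inf (A := (0:ℝ)) (B := T) (L := C) hlip
    ⟨T, hTT, hfT⟩
  have hf0 : infDist (γ 0) Y = infDist x Y := by rw [hγ0]
  have hu0 : 0 < u := by
    rcases lt_or_ge 0 u with h | h
    · exact h
    · exfalso
      have : u = 0 := le_antisymm h huI.1
      rw [this, hf0] at hfu
      linarith
  -- u ≥ infDist x Y - C
  have huge : infDist x Y - C ≤ u := by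
    have h1 : infDist (γ 0) Y ≤ infDist (γ u) Y + |0 - u| := hlip 0 h0T u huI
    rw [hf0, abs_of_nonpos (by linarith : (0:ℝ) - u ≤ 0)] at h1
    simp only [neg_sub, sub_zero] at h1
    linarith
  set u' := max (u - 1) 0 with hu'def
  have hu'0 : 0 ≤ u' := le_max_right _ _
  have hu'lt : u' < u := by
    rcases le_total (u - 1) 0 with h | h
    · rw [hu'def, max_eq_right h]; exact hu0
    · rw [hu'def, max_eq_left h]; linarith
  have huu' : u - u' ≤ 1 := by
    rcases le_total (u - 1) 0 with h | h
    · rw [hu'def, max_eq_right h]; linarith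
    · rw [hu'def, max_eq_left h]; linarith
  have hu'I : u' ∈ Icc (0:ℝ) T := ⟨hu'0, le_trans hu'lt.le huI.2⟩
  have hfaru : ∀ t ∈ Icc (0:ℝ) u', C ≤ infDist (γ t) Y :=
    fun t ht => le_of_lt (humin t ⟨ht.1, le_trans ht.2 hu'I.2⟩
      (lt_of_le_of_lt ht.2 hu'lt))
  obtain ⟨q, hq⟩ := projSet_nonempty hYne (γ u')
  have hp0 : p ∈ projSet Y (γ 0) := by rw [hγ0]; exact hp
  have hpq : dist p q ≤ C :=
    contract_apply hcon hγ le_rfl hu'0 hu'I.2 hfaru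
      ⟨le_rfl, hu'0⟩ ⟨hu'0, le_rfl⟩ hp0 hq
  have hfu' : infDist (γ u') Y ≤ C + 1 := by
    have := hlip u' hu'I u huI
    rw [abs_of_nonpos (by linarith : u' - u ≤ 0), neg_sub] at this
    linarith
  have hdwu' : dist w (γ u') = T - u' := by
    rw [← hγT, dist_comm, hγ u' hu'I T hTT, abs_of_nonpos (by linarith [huI.2] : u' - T ≤ 0),
      neg_sub]
  have hTu' : T - u' ≤ C + ε + 1 := by
    have : T ≤ infDist x Y + ε := hdxw
    have h2 : infDist x Y - C - 1 ≤ u' := by linarith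
    linarith
  calc dist w p ≤ dist w (γ u') + dist (γ u') q + dist q p := by
        linarith [dist_triangle w (γ u') p, dist_triangle (γ u') q p]
    _ ≤ (C + ε + 1) + (C + 1) + C := by
        have e1 : dist (γ u') q = infDist (γ u') Y := hq.2
        have e2 : dist q p = dist p q := dist_comm _ _
        rw [e1, e2, hdwu']
        linarith
    _ = 3 * C + ε + 2 := by ring

/-- Perturbation: a set `Y'` within symmetric pointwise distance `B` of a
`C`-contracting set `Y` is `(7C+6B+10)`-contracting. -/
lemma contracting_perturb [ProperSpace X] (hgeo : GeodesicSpace X) {C B : ℝ} {Y Y' : Set X}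
    (hC : 0 ≤ C) (hB : 0 ≤ B) (hYne : Y.Nonempty)
    (hcon : IsContractingWith C Y)
    (h1 : ∀ y' ∈ Y', infDist y' Y ≤ B) (h2 : ∀ y ∈ Y, infDist y Y' ≤ B) :
    IsContractingWith (7*C + 6*B + 10) Y' := by
  rcases Y'.eq_empty_or_nonempty with rfl | hY'ne
  · intro s hs hfar p hp q hq
    exfalso
    simp only [projSetOf, projSet, closure_empty, Set.mem_iUnion] at hp
    obtain ⟨x, hx, hpc, -⟩ := hp
    exact hpc
  intro s hseg hfar p hp q hq
  simp only [projSetOf, Set.mem_iUnion] at hp hq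
  obtain ⟨x, hx, hpx⟩ := hp
  obtain ⟨y, hy, hqy⟩ := hq
  -- comparison of infDists
  have hcmp : ∀ z : X, infDist z Y' ≤ infDist z Y + (B + 1) := by
    intro z
    obtain ⟨yy, hyy, hdyy⟩ := (infDist_lt_iff hYne).mp
      (lt_add_of_pos_right (infDist z Y) (by norm_num : (0:ℝ) < 1/2))
    obtain ⟨y', hy', hdy'⟩ := (infDist_lt_iff hY'ne).mp
      (lt_of_le_of_lt (h2 yy hyy) (lt_add_of_pos_right B (by norm_num : (0:ℝ) < 1/2)))
    calc infDist z Y' ≤ dist z y' := infDist_le_dist_of_mem hy'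
      _ ≤ dist z yy + dist yy y' := dist_triangle _ _ _
      _ ≤ infDist z Y + (B + 1) := by linarith
  have hfarY : ∀ z ∈ s, C + 1 ≤ infDist z Y := by
    intro z hz
    have := hfar z hz
    have := hcmp z
    linarith
  -- treat x / p
  have key : ∀ x' ∈ s, ∀ p' : X, p' ∈ projSet Y' x' →
      ∀ px ∈ projSet Y x', dist p' px ≤ 3 * C + 3 * B + 5 := by
    intro x' hx' p' hp' px hpx
    -- p' is in the closure of Y', hence B-close to Y
    have hp'B : infDist p' Y ≤ B := by
      refine le_of_forall_pos_le_add fun δ hδ => ?_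
      obtain ⟨y', hy', hdy'⟩ := Metric.mem_closure_iff.mp hp'.1 δ hδ
      calc infDist p' Y ≤ infDist y' Y + dist p' y' := infDist_le_infDist_add_dist
        _ ≤ B + δ := by linarith [h1 y' hy', hdy'.le]
    obtain ⟨w, hwY, hdw⟩ := (infDist_lt_iff hYne).mp
      (lt_of_le_of_lt hp'B (lt_add_of_pos_right B one_pos))
    have hdxw : dist x' w ≤ infDist x' Y + (2*B + 2) := by
      have hxp' : dist x' p' = infDist x' Y' := hp'.2
      have h3 : infDist x' Y' ≤ infDist x' Y + (B+1) := hcmp x'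
      calc dist x' w ≤ dist x' p' + dist p' w := dist_triangle _ _ _
        _ ≤ infDist x' Y + (2*B + 2) := by linarith
    have hnp : dist w px ≤ 3 * C + (2*B+2) + 2 :=
      near_projection hC (by linarith) hYne hcon hgeo hwY hdxw (hfarY x' hx') hpx
    calc dist p' px ≤ dist p' w + dist w px := dist_triangle _ _ _
      _ ≤ 3 * C + 3 * B + 5 := by linarith
  obtain ⟨px, hPx⟩ := projSet_nonempty hYne x
  obtain ⟨py, hPy⟩ := projSet_nonempty hYne y
  have hxy : dist px py ≤ C := by
    refine hcon s hseg (fun z hz => by linarith [hfarY z hz]) px ?_ py ?_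
    · exact Set.mem_biUnion hx hPx
    · exact Set.mem_biUnion hy hPy
  have k1 : dist p px ≤ 3*C + 3*B + 5 := key x hx p hpx px hPx
  have k2 : dist q py ≤ 3*C + 3*B + 5 := key y hy q hqy py hPy
  calc dist p q ≤ dist p px + dist px py + dist py q := by
        linarith [dist_triangle p px q, dist_triangle px py q]
    _ ≤ (3*C + 3*B + 5) + C + (3*C + 3*B + 5) := by
        rw [dist_comm py q]; linarith
    _ = 7*C + 6*B + 10 := by ring

end ERhelp

end Helpers3
section Helpers4

open Metric Set

variable {X : Type*} [MetricSpace X] {G : Type*} [Group G] [MulAction G X]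

namespace ERhelp

/-- The isometry equivalence given by a group element. -/
def smulIsomEquiv (hiso : ∀ g : G, Isometry fun x : X => g • x) (k : G) : X ≃ᵢ X where
  toFun := fun x => k • x
  invFun := fun x => k⁻¹ • x
  left_inv := fun x => inv_smul_smul k x
  right_inv := fun x => smul_inv_smul k x
  isometry_toFun := hiso k

lemma closure_smul_image (hiso : ∀ g : G, Isometry fun x : X => g • x) (k : G) (Y : Set X) :
    closure ((fun y => k • y) '' Y) = (fun y => k • y) '' closure Y :=
  ((smulIsomEquiv hiso k).toHomeomorph.image_closure Y).symm

lemma projSet_smul_image (hiso : ∀ g : G, Isometry fun x : X => g • x) (k : G) (Y : Set X) (x : X) :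
    projSet ((fun y => k • y) '' Y) (k • x) = (fun y => k • y) '' projSet Y x := by
  have hcl := closure_smul_image hiso k Y
  ext z
  constructor
  · rintro ⟨hzc, hzd⟩
    rw [hcl] at hzc
    obtain ⟨y, hy, rfl⟩ := hzc
    refine ⟨y, ⟨hy, ?_⟩, rfl⟩
    rwa [(hiso k).dist_eq, infDist_image (hiso k)] at hzd
  · rintro ⟨y, ⟨hy, hyd⟩, rfl⟩
    refine ⟨by rw [hcl]; exact Set.mem_image_of_mem _ hy, ?_⟩
    rw [(hiso k).dist_eq, infDist_image (hiso k)]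
    exact hyd

lemma isGeodesicFromTo_smul (hiso : ∀ g : G, Isometry fun x : X => g • x) (k : G) {s : Set X} {x y : X}
    (h : IsGeodesicFromTo s x y) :
    IsGeodesicFromTo ((fun z => k • z) '' s) (k • x) (k • y) := by
  obtain ⟨γ, hγ, h0, hT, hs⟩ := h
  have hd : dist (k • x) (k • y) = dist x y := (hiso k).dist_eq x y
  refine ⟨fun t => k • γ t, ?_, by show k • γ 0 = k • x; rw [h0],
    by show k • γ (dist (k • x) (k • y)) = k • y; rw [hd, hT],
    by rw [hd, hs, Set.image_image]⟩
  intro u hu v hv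
  rw [hd] at hu hv
  rw [(hiso k).dist_eq]
  exact hγ u hu v hv

lemma isContractingWith_smul (hiso : ∀ g : G, Isometry fun x : X => g • x) (k : G) {C : ℝ} {Y : Set X}
    (h : IsContractingWith C Y) :
    IsContractingWith C ((fun z => k • z) '' Y) := by
  intro s hseg hfar p hp q hq
  have hs' : (fun z => k • z) '' ((fun z => k⁻¹ • z) '' s) = s := by
    rw [Set.image_image]
    simp only [smul_inv_smul, Set.image_id']
  have hseg' : IsGeodesicSegment ((fun z => k⁻¹ • z) '' s) := by
    obtain ⟨x, y, hxy⟩ := hseg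
    exact ⟨k⁻¹ • x, k⁻¹ • y, isGeodesicFromTo_smul hiso k⁻¹ hxy⟩
  have hfar' : ∀ w ∈ (fun z => k⁻¹ • z) '' s, C ≤ infDist w Y := by
    rintro w ⟨z, hz, rfl⟩
    have : infDist (k • (k⁻¹ • z)) ((fun z => k • z) '' Y) = infDist (k⁻¹ • z) Y :=
      infDist_image (hiso k)
    rw [smul_inv_smul] at this
    rw [← this]
    exact hfar z hz
  -- transfer projections
  have hproj : ∀ w : X, w ∈ projSetOf ((fun z => k • z) '' Y) s →
      k⁻¹ • w ∈ projSetOf Y ((fun z => k⁻¹ • z) '' s) := by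
    intro w hw
    simp only [projSetOf, Set.mem_iUnion] at hw ⊢
    obtain ⟨z, hz, hwz⟩ := hw
    refine ⟨k⁻¹ • z, Set.mem_image_of_mem _ hz, ?_⟩
    have : projSet ((fun y => k • y) '' Y) (k • (k⁻¹ • z)) =
        (fun y => k • y) '' projSet Y (k⁻¹ • z) := projSet_smul_image hiso k Y (k⁻¹ • z)
    rw [smul_inv_smul] at this
    rw [this] at hwz
    obtain ⟨y, hy, rfl⟩ := hwz
    rwa [inv_smul_smul]
  have h1 := hproj p hp
  have h2 := hproj q hq
  have := h ((fun z => k⁻¹ • z) '' s) hseg' hfar' _ h1 _ h2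
  rwa [(hiso k⁻¹).dist_eq] at this

lemma hausdorffEdist_ne_top_of_pointwise {A B : Set X} {r : ℝ}
    (hAne : A.Nonempty) (hBne : B.Nonempty)
    (h1 : ∀ x ∈ A, infDist x B ≤ r) (h2 : ∀ y ∈ B, infDist y A ≤ r) :
    EMetric.hausdorffEdist A B ≠ ⊤ := by
  have hle : EMetric.hausdorffEdist A B ≤ ENNReal.ofReal (r + 1) := by
    apply EMetric.hausdorffEdist_le_of_infEdist
    · intro x hx
      obtain ⟨y, hy, hd⟩ := (infDist_lt_iff hBne).mp
        (lt_of_le_of_lt (h1 x hx) (lt_add_one r))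
      exact le_trans (EMetric.infEdist_le_edist_of_mem hy)
        (by rw [edist_dist]; exact ENNReal.ofReal_le_ofReal hd.le)
    · intro y hy
      obtain ⟨x, hx, hd⟩ := (infDist_lt_iff hAne).mp
        (lt_of_le_of_lt (h2 y hy) (lt_add_one r))
      exact le_trans (EMetric.infEdist_le_edist_of_mem hx)
        (by rw [edist_dist]; exact ENNReal.ofReal_le_ofReal hd.le)
  exact ne_top_of_le_ne_top ENNReal.ofReal_ne_top hle

lemma cyclicOrbit_nonempty (g : G) (o : X) : (cyclicOrbit g o).Nonempty :=
  ⟨o, 0, by simp⟩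

lemma smul_image_cyclicOrbit (k g : G) (o : X) :
    (fun x : X => k • x) '' cyclicOrbit g o
      = Set.range (fun n : ℤ => k • ((g ^ n) • o)) := by
  unfold cyclicOrbit
  rw [← Set.range_comp]
  rfl

lemma cyclicOrbit_conj (k g : G) (o : X) :
    cyclicOrbit (k * g * k⁻¹) o
      = (fun x : X => k • x) '' Set.range (fun n : ℤ => (g ^ n) • (k⁻¹ • o)) := by
  have hfun : (fun n : ℤ => ((k * g * k⁻¹) ^ n) • o)
      = fun n : ℤ => k • ((g ^ n) • (k⁻¹ • o)) := by
    funext n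
    rw [conj_zpow, mul_smul, mul_smul]
  unfold cyclicOrbit
  rw [← Set.range_comp]
  exact congrArg Set.range hfun

end ERhelp

end Helpers4
section Helpers5

open Metric Set

variable {X : Type*} [MetricSpace X]

namespace ERhelp

set_option maxHeartbeats 1600000 in
/-- Uniformization: if a `C`-contracting quasi-line `z` stays within distance `r`
of a `C`-contracting set `Y`, then it is within a distance of `Y` depending only on
the constants `C, K, c` (not on `r`). -/
lemma quasi_line_close [ProperSpace X] (hgeo : GeodesicSpace X)
    {C K c r : ℝ} (hC : 0 ≤ C) (hK : 1 ≤ K) (hc : 0 ≤ c) (hr : 0 ≤ r)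
    {Y : Set X} (hYne : Y.Nonempty) (hconY : IsContractingWith C Y)
    {z : ℤ → X}
    (hlow : ∀ i j : ℤ, |(i:ℝ) - (j:ℝ)| / K - c ≤ dist (z i) (z j))
    (hupp : ∀ i j : ℤ, dist (z i) (z j) ≤ K * |(i:ℝ) - (j:ℝ)| + c)
    (hconZ : IsContractingWith C (Set.range z))
    (hzY : ∀ i : ℤ, infDist (z i) Y ≤ r)
    (n : ℤ) :
    infDist (z n) Y ≤ K * (K * (8*C + 11 + c)) + c + 4*C + 5 + (4*C + 4) := by
  have hK0 : (0:ℝ) < K := lt_of_lt_of_le one_pos hK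
  set J : ℝ := K * (8*C + 11 + c) with hJdef
  have hJ0 : 0 ≤ J := mul_nonneg (by linarith) (by linarith)
  set D2 : ℝ := K * J + c + 4*C + 5 with hD2def
  have hD20 : 0 ≤ D2 := by
    have : 0 ≤ K * J := mul_nonneg (by linarith) hJ0
    linarith
  set A : ℝ := c + 2*r + D2 + 4*C + 6 with hAdef
  have hA0 : (0:ℝ) ≤ A := by linarith
  set m : ℕ := ⌈K * A⌉₊ with hmdef
  have hmK : K * A ≤ (m:ℝ) := Nat.le_ceil _
  have hmA : A ≤ (m:ℝ) / K := by
    rw [le_div_iff₀ hK0]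
    calc A * K = K * A := by ring
      _ ≤ (m:ℝ) := hmK
  set iM : ℤ := n - (m:ℤ) with hiMdef
  set iP : ℤ := n + (m:ℤ) with hiPdef
  have hcastM : ((iM:ℤ):ℝ) = (n:ℝ) - (m:ℝ) := by rw [hiMdef]; push_cast; ring
  have hcastP : ((iP:ℤ):ℝ) = (n:ℝ) + (m:ℝ) := by rw [hiPdef]; push_cast; ring
  have hm0 : (0:ℝ) ≤ (m:ℝ) := Nat.cast_nonneg m
  -- distance lower bounds along the quasi-line
  have dnM : 2*r + D2 + 4*C + 6 ≤ dist (z n) (z iM) := by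
    have h1 := hlow n iM
    rw [hcastM, show (n:ℝ) - ((n:ℝ) - (m:ℝ)) = (m:ℝ) by ring, abs_of_nonneg hm0] at h1
    have h2 : A ≤ (m:ℝ)/K := hmA
    have h3 : A - c ≤ (m:ℝ)/K - c := by linarith
    calc 2*r + D2 + 4*C + 6 = A - c := by rw [hAdef]; ring
      _ ≤ (m:ℝ)/K - c := h3
      _ ≤ dist (z n) (z iM) := h1
  have dnP : 2*r + D2 + 4*C + 6 ≤ dist (z n) (z iP) := by
    have h1 := hlow n iP
    rw [hcastP, show (n:ℝ) - ((n:ℝ) + (m:ℝ)) = -(m:ℝ) by ring, abs_neg,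
      abs_of_nonneg hm0] at h1
    calc 2*r + D2 + 4*C + 6 = A - c := by rw [hAdef]; ring
      _ ≤ (m:ℝ)/K - c := by linarith
      _ ≤ dist (z n) (z iP) := h1
  have dMP : 2*A - c ≤ dist (z iM) (z iP) := by
    have h1 := hlow iM iP
    rw [hcastM, hcastP, show ((n:ℝ) - (m:ℝ)) - ((n:ℝ) + (m:ℝ)) = -(2*(m:ℝ)) by ring,
      abs_neg, abs_of_nonneg (by linarith)] at h1
    have h2 : 2*A ≤ 2*(m:ℝ)/K := by
      rw [le_div_iff₀ hK0]
      calc 2*A*K = 2*(K*A) := by ring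
        _ ≤ 2*(m:ℝ) := by linarith
    linarith
  -- projections of the anchor points
  obtain ⟨qm, hqm⟩ := projSet_nonempty hYne (z iM)
  obtain ⟨qp, hqp⟩ := projSet_nonempty hYne (z iP)
  have hqmr : dist (z iM) qm ≤ r := by rw [hqm.2]; exact hzY iM
  have hqpr : dist (z iP) qp ≤ r := by rw [hqp.2]; exact hzY iP
  have hqq : C < dist qm qp := by
    have htri : dist (z iM) (z iP) ≤ dist (z iM) qm + dist qm qp + dist qp (z iP) := by
      linarith [dist_triangle (z iM) qm (z iP), dist_triangle qm qp (z iP)]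
    have h1 : dist qp (z iP) ≤ r := by rw [dist_comm]; exact hqpr
    have h2 : 2*A - c = c + 4*r + 2*D2 + 8*C + 12 := by rw [hAdef]; ring
    linarith
  -- the geodesic between the anchors
  obtain ⟨sgeo, γ, hγ, hγ0, hγT, -⟩ := hgeo (z iM) (z iP)
  set T : ℝ := dist (z iM) (z iP) with hTdef
  have hT : 0 ≤ T := dist_nonneg
  have hlip := lip_infDist (Y := Y) (T := T) hγ
  have h0T : (0:ℝ) ∈ Icc (0:ℝ) T := ⟨le_rfl, hT⟩
  have hTT : T ∈ Icc (0:ℝ) T := ⟨hT, le_rfl⟩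
  have hqm0 : qm ∈ projSet Y (γ 0) := by rw [hγ0]; exact hqm
  have hqpT : qp ∈ projSet Y (γ T) := by rw [hγT]; exact hqp
  -- the geodesic must dip below level C
  have hdip : ∃ t ∈ Icc (0:ℝ) T, infDist (γ t) Y ≤ C := by
    by_contra h
    push_neg at h
    have := contract_apply hconY hγ le_rfl hT le_rfl
      (fun t ht => (h t ht).le) h0T hTT hqm0 hqpT
    linarith
  obtain ⟨t₁, ht₁I, hft₁, t₁min⟩ := crossing_inf (A := (0:ℝ)) (B := T) (L := C) hlip hdip
  obtain ⟨t₂, ht₂I, hft₂, t₂max⟩ := crossing_sup (A := (0:ℝ)) (B := T) (L := C) hlip hdip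
  have ht₁₂ : t₁ ≤ t₂ := by
    by_contra h
    push_neg at h
    exact absurd hft₂ (not_le.mpr (t₁min t₂ ht₂I h))
  -- the initial segment is short
  have hE1 : t₁ ≤ r + 2*C + 2 := by
    rcases le_or_gt t₁ 1 with h | h
    · linarith
    · have ht₁' : t₁ - 1 ∈ Icc (0:ℝ) T := ⟨by linarith, by linarith [ht₁I.2]⟩
      have hfar1 : ∀ t ∈ Icc (0:ℝ) (t₁ - 1), C ≤ infDist (γ t) Y := fun t ht =>
        (t₁min t ⟨ht.1, le_trans ht.2 ht₁'.2⟩ (by linarith [ht.2])).le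
      obtain ⟨p₁, hp₁⟩ := projSet_nonempty hYne (γ (t₁ - 1))
      have hqmp₁ : dist qm p₁ ≤ C :=
        contract_apply hconY hγ le_rfl (by linarith) ht₁'.2 hfar1
          ⟨le_rfl, by linarith⟩ ⟨by linarith, le_rfl⟩ hqm0 hp₁
      have hd01 : dist (γ 0) (γ (t₁ - 1)) = t₁ - 1 := by
        rw [hγ 0 h0T _ ht₁', abs_of_nonpos (by linarith : (0:ℝ) - (t₁ - 1) ≤ 0)]
        ring
      have hft₁' : infDist (γ (t₁ - 1)) Y ≤ C + 1 := by
        have := hlip (t₁ - 1) ht₁' t₁ ht₁I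
        rw [show |t₁ - 1 - t₁| = 1 by rw [show t₁ - 1 - t₁ = -1 by ring, abs_neg, abs_one]]
          at this
        linarith
      have hd0qm : dist (γ 0) qm ≤ r := by rw [hγ0]; exact hqmr
      have htri : dist (γ 0) (γ (t₁ - 1)) ≤
          dist (γ 0) qm + dist qm p₁ + dist p₁ (γ (t₁ - 1)) := by
        linarith [dist_triangle (γ 0) qm (γ (t₁ - 1)), dist_triangle qm p₁ (γ (t₁ - 1))]
      have hp₁d : dist p₁ (γ (t₁ - 1)) ≤ C + 1 := by
        rw [dist_comm, hp₁.2]; exact hft₁'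
      rw [hd01] at htri
      linarith
  -- the final segment is short
  have hE2 : T - t₂ ≤ r + 2*C + 2 := by
    rcases le_or_gt (T - t₂) 1 with h | h
    · linarith
    · have ht₂' : t₂ + 1 ∈ Icc (0:ℝ) T := ⟨by linarith [ht₂I.1], by linarith⟩
      have hfar2 : ∀ t ∈ Icc (t₂ + 1) T, C ≤ infDist (γ t) Y := fun t ht =>
        (t₂max t ⟨le_trans ht₂'.1 ht.1, ht.2⟩ (by linarith [ht.1])).le
      obtain ⟨p₂, hp₂⟩ := projSet_nonempty hYne (γ (t₂ + 1))
      have hqpp₂ : dist p₂ qp ≤ C :=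
        contract_apply hconY hγ ht₂'.1 (by linarith) le_rfl hfar2
          ⟨le_rfl, by linarith⟩ ⟨by linarith, le_rfl⟩ hp₂ hqpT
      have hd2T : dist (γ (t₂ + 1)) (γ T) = T - (t₂ + 1) := by
        rw [hγ _ ht₂' T hTT, abs_of_nonpos (by linarith : t₂ + 1 - T ≤ 0)]
        ring
      have hft₂' : infDist (γ (t₂ + 1)) Y ≤ C + 1 := by
        have := hlip (t₂ + 1) ht₂' t₂ ht₂I
        rw [show |t₂ + 1 - t₂| = 1 by rw [show t₂ + 1 - t₂ = (1:ℝ) by ring, abs_one]] at this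
        linarith
      have hdTqp : dist (γ T) qp ≤ r := by rw [hγT]; exact hqpr
      have htri : dist (γ (t₂ + 1)) (γ T) ≤
          dist (γ (t₂ + 1)) p₂ + dist p₂ qp + dist qp (γ T) := by
        linarith [dist_triangle (γ (t₂ + 1)) p₂ (γ T), dist_triangle p₂ qp (γ T)]
      have hp₂d : dist (γ (t₂ + 1)) p₂ ≤ C + 1 := by rw [hp₂.2]; exact hft₂'
      have hqpd : dist qp (γ T) ≤ r := by rw [dist_comm]; exact hdTqp
      rw [hd2T] at htri
      linarith
  -- the middle of the geodesic is uniformly close to Y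
  have hMid : ∀ t ∈ Icc t₁ t₂, infDist (γ t) Y ≤ 4*C + 4 := by
    intro t ht
    have hγ' : ∀ u ∈ Icc (0:ℝ) (t₂ - t₁), ∀ v ∈ Icc (0:ℝ) (t₂ - t₁),
        dist (γ (t₁ + u)) (γ (t₁ + v)) = |u - v| := by
      intro u hu v hv
      rw [hγ (t₁ + u) ⟨by linarith [ht₁I.1, hu.1], by linarith [ht₂I.2, hu.2]⟩
        (t₁ + v) ⟨by linarith [ht₁I.1, hv.1], by linarith [ht₂I.2, hv.2]⟩]
      congr 1
      ring
    have h0' : infDist (γ (t₁ + 0)) Y ≤ C := by rw [add_zero]; exact hft₁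
    have hT' : infDist (γ (t₁ + (t₂ - t₁))) Y ≤ C := by
      rw [show t₁ + (t₂ - t₁) = t₂ by ring]; exact hft₂
    have := geodesic_near (C := C) (a := C) hC hC hYne hconY
      (by linarith : (0:ℝ) ≤ t₂ - t₁) hγ' h0' hT' (t - t₁) ⟨by linarith [ht.1], by linarith [ht.2]⟩
    rw [show t₁ + (t - t₁) = t by ring, max_self] at this
    linarith
  -- the geodesic stays close to the quasi-line (Lemma G for Z)
  have hZne : (Set.range z).Nonempty := ⟨z 0, Set.mem_range_self 0⟩
  have hNearZ : ∀ t ∈ Icc (0:ℝ) T, infDist (γ t) (Set.range z) ≤ 4*C + 4 := by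
    have h0z : infDist (γ 0) (Set.range z) ≤ 0 := by
      rw [hγ0]
      have h := infDist_le_dist_of_mem (x := z iM) (show z iM ∈ Set.range z from ⟨iM, rfl⟩)
      rwa [dist_self] at h
    have hTz : infDist (γ T) (Set.range z) ≤ 0 := by
      rw [hγT]
      have h := infDist_le_dist_of_mem (x := z iP) (show z iP ∈ Set.range z from ⟨iP, rfl⟩)
      rwa [dist_self] at h
    intro t htI
    have := geodesic_near (C := C) (a := (0:ℝ)) hC le_rfl hZne hconZ hT hγ h0z hTz t htI
    rw [max_eq_left hC] at this
    linarith
  -- a coarse walk along the geodesic through the quasi-line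
  have hchoice : ∀ s : ℕ, ∃ i : ℤ, dist (γ (min (s:ℝ) T)) (z i) < 4*C + 5 := by
    intro s
    have hmem : min (s:ℝ) T ∈ Icc (0:ℝ) T := ⟨le_min (Nat.cast_nonneg s) hT, min_le_right _ _⟩
    obtain ⟨w, hwZ, hw⟩ := (infDist_lt_iff hZne).mp
      (lt_of_le_of_lt (hNearZ _ hmem) (by linarith : 4*C + 4 < 4*C + 5))
    obtain ⟨i, rfl⟩ := hwZ
    exact ⟨i, hw⟩
  choose j hj using hchoice
  set S : ℕ := ⌈T⌉₊ with hSdef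
  have hj0 : (j 0 : ℝ) < (n : ℝ) := by
    have hd := hj 0
    rw [show min ((0:ℕ):ℝ) T = 0 by simp [hT], hγ0] at hd
    have hl := hlow iM (j 0)
    have habs : |((iM:ℤ):ℝ) - (j 0 : ℝ)| ≤ K * (4*C + 5 + c) := by
      have h1 : |((iM:ℤ):ℝ) - (j 0 : ℝ)| / K ≤ 4*C + 5 + c := by
        have hd' : dist (z iM) (z (j 0)) ≤ 4*C + 5 := hd.le
        linarith
      calc |((iM:ℤ):ℝ) - (j 0 : ℝ)| = (|((iM:ℤ):ℝ) - (j 0 : ℝ)| / K) * K := by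
            field_simp
        _ ≤ (4*C + 5 + c) * K := by
            exact mul_le_mul_of_nonneg_right h1 (le_of_lt hK0)
        _ = K * (4*C + 5 + c) := by ring
    have h2 : (j 0 : ℝ) ≤ ((iM:ℤ):ℝ) + K * (4*C + 5 + c) := by
      have := abs_le.mp habs
      linarith [this.1]
    have h3 : K * A ≥ K * (4*C + 5 + c) + 1 := by
      have : A - (4*C + 5 + c) = 2*r + D2 + 1 := by rw [hAdef]; ring
      have h4 : K * A - K * (4*C + 5 + c) = K * (2*r + D2 + 1) := by
        rw [← mul_sub]; rw [this]
      nlinarith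
    rw [hcastM] at h2
    linarith
  have hjS : (n : ℝ) < (j S : ℝ) := by
    have hd := hj S
    rw [show min ((S:ℕ):ℝ) T = T from min_eq_right (Nat.le_ceil T), hγT] at hd
    have hl := hlow iP (j S)
    have habs : |((iP:ℤ):ℝ) - (j S : ℝ)| ≤ K * (4*C + 5 + c) := by
      have h1 : |((iP:ℤ):ℝ) - (j S : ℝ)| / K ≤ 4*C + 5 + c := by
        have hd' : dist (z iP) (z (j S)) ≤ 4*C + 5 := hd.le
        linarith
      calc |((iP:ℤ):ℝ) - (j S : ℝ)| = (|((iP:ℤ):ℝ) - (j S : ℝ)| / K) * K := by field_simp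
        _ ≤ (4*C + 5 + c) * K := mul_le_mul_of_nonneg_right h1 (le_of_lt hK0)
        _ = K * (4*C + 5 + c) := by ring
    have h2 : ((iP:ℤ):ℝ) - K * (4*C + 5 + c) ≤ (j S : ℝ) := by
      have := abs_le.mp habs
      linarith [this.2]
    have h3 : K * A ≥ K * (4*C + 5 + c) + 1 := by
      have heq : A - (4*C + 5 + c) = 2*r + D2 + 1 := by rw [hAdef]; ring
      have h4 : K * A - K * (4*C + 5 + c) = K * (2*r + D2 + 1) := by
        rw [← mul_sub]; rw [heq]
      nlinarith
    rw [hcastP] at h2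
    linarith
  have hstep : ∀ s : ℕ, |(j (s+1) : ℝ) - (j s : ℝ)| ≤ J := by
    intro s
    have h1 := hj s
    have h2 := hj (s+1)
    have hmem1 : min ((s:ℕ):ℝ) T ∈ Icc (0:ℝ) T :=
      ⟨le_min (Nat.cast_nonneg s) hT, min_le_right _ _⟩
    have hmem2 : min (((s+1:ℕ)):ℝ) T ∈ Icc (0:ℝ) T :=
      ⟨le_min (Nat.cast_nonneg _) hT, min_le_right _ _⟩
    have hdmin : dist (γ (min ((s:ℕ):ℝ) T)) (γ (min (((s+1:ℕ)):ℝ) T)) ≤ 1 := by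
      rw [hγ _ hmem1 _ hmem2]
      have hcast : (((s+1:ℕ)):ℝ) = (s:ℝ) + 1 := by push_cast; ring
      rw [hcast]
      rcases le_total ((s:ℝ) + 1) T with hcase | hcase
      · rw [min_eq_left (by linarith : (s:ℝ) ≤ T), min_eq_left hcase]
        rw [show (s:ℝ) - ((s:ℝ)+1) = -1 by ring, abs_neg, abs_one]
      · rcases le_total ((s:ℝ)) T with hcase' | hcase'
        · rw [min_eq_left hcase', min_eq_right hcase]
          rw [abs_of_nonpos (by linarith : (s:ℝ) - T ≤ 0)]
          linarith
        · rw [min_eq_right hcase', min_eq_right (by linarith : T ≤ (s:ℝ)+1)]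
          simp
    have htri : dist (z (j s)) (z (j (s+1))) ≤ 8*C + 11 := by
      have t1 : dist (z (j s)) (γ (min ((s:ℕ):ℝ) T)) < 4*C + 5 := by
        rw [dist_comm]; exact h1
      have t2 : dist (γ (min (((s+1:ℕ)):ℝ) T)) (z (j (s+1))) < 4*C + 5 := h2
      calc dist (z (j s)) (z (j (s+1))) ≤
            dist (z (j s)) (γ (min ((s:ℕ):ℝ) T)) +
            dist (γ (min ((s:ℕ):ℝ) T)) (γ (min (((s+1:ℕ)):ℝ) T)) +
            dist (γ (min (((s+1:ℕ)):ℝ) T)) (z (j (s+1))) := by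
              linarith [dist_triangle (z (j s)) (γ (min ((s:ℕ):ℝ) T)) (z (j (s+1))),
                dist_triangle (γ (min ((s:ℕ):ℝ) T)) (γ (min (((s+1:ℕ)):ℝ) T)) (z (j (s+1)))]
        _ ≤ 8*C + 11 := by linarith
    have hl := hlow (j s) (j (s+1))
    have habs : |(j s : ℝ) - (j (s+1) : ℝ)| ≤ K * (8*C + 11 + c) := by
      have h1' : |(j s : ℝ) - (j (s+1) : ℝ)| / K ≤ 8*C + 11 + c := by linarith
      calc |(j s : ℝ) - (j (s+1) : ℝ)| = (|(j s : ℝ) - (j (s+1) : ℝ)| / K) * K := by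
            field_simp
        _ ≤ (8*C + 11 + c) * K := mul_le_mul_of_nonneg_right h1' (le_of_lt hK0)
        _ = K * (8*C + 11 + c) := by ring
    rw [abs_sub_comm] at habs
    exact habs
  -- discrete intermediate value
  have hivt : ∃ s : ℕ, j s ≤ n ∧ n < j (s+1) := by
    by_contra h
    push_neg at h
    have hall : ∀ s : ℕ, j s ≤ n := by
      intro s
      induction s with
      | zero => exact_mod_cast hj0.le
      | succ s ih => exact h s ih
    have hx : ((j S : ℤ):ℝ) ≤ (n:ℝ) := by exact_mod_cast hall S
    linarith
  obtain ⟨s₀, hs₀, hs₀'⟩ := hivt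
  have hjn : |(j (s₀+1) : ℝ) - (n:ℝ)| ≤ J := by
    have h1 : (n:ℝ) < (j (s₀+1) : ℝ) := by exact_mod_cast hs₀'
    have h2 : (j s₀ : ℝ) ≤ (n:ℝ) := by exact_mod_cast hs₀
    have h3 := hstep s₀
    rw [abs_of_nonneg (by linarith : (0:ℝ) ≤ (j (s₀+1) : ℝ) - (n:ℝ))]
    have h4 : (j (s₀+1):ℝ) - (j s₀:ℝ) ≤ J := le_trans (le_abs_self _) h3
    linarith
  have htsI : min (((s₀+1:ℕ)):ℝ) T ∈ Icc (0:ℝ) T :=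
    ⟨le_min (Nat.cast_nonneg _) hT, min_le_right _ _⟩
  have hznt : dist (z n) (γ (min (((s₀+1:ℕ)):ℝ) T)) ≤ D2 := by
    have h1 := hj (s₀+1)
    have h2 := hupp n (j (s₀+1))
    have h3 : |(n:ℝ) - (j (s₀+1) : ℝ)| ≤ J := by rw [abs_sub_comm]; exact hjn
    have h4 : K * |(n:ℝ) - (j (s₀+1) : ℝ)| ≤ K * J :=
      mul_le_mul_of_nonneg_left h3 (le_of_lt hK0)
    calc dist (z n) (γ (min (((s₀+1:ℕ)):ℝ) T)) ≤
          dist (z n) (z (j (s₀+1))) + dist (z (j (s₀+1))) (γ (min (((s₀+1:ℕ)):ℝ) T)) :=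
            dist_triangle _ _ _
      _ ≤ (K * J + c) + (4*C + 5) := by
          have h5 : dist (z (j (s₀+1))) (γ (min (((s₀+1:ℕ)):ℝ) T)) ≤ 4*C + 5 := by
            rw [dist_comm]; exact h1.le
          linarith
      _ = D2 := by rw [hD2def]; ring
  set tstar : ℝ := min (((s₀+1:ℕ)):ℝ) T with htstardef
  rcases lt_or_ge tstar t₁ with hcase | hcase
  · exfalso
    have hd0 : dist (γ tstar) (γ 0) = tstar := by
      rw [hγ _ htsI 0 h0T, sub_zero, abs_of_nonneg htsI.1]
    have hzd : dist (z n) (z iM) ≤ D2 + tstar := by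
      calc dist (z n) (z iM) ≤ dist (z n) (γ tstar) + dist (γ tstar) (z iM) :=
            dist_triangle _ _ _
        _ ≤ D2 + tstar := by
            rw [← hγ0, hd0] at *
            linarith [hznt]
    linarith
  rcases le_or_gt tstar t₂ with hcase2 | hcase2
  · have h1 := hMid tstar ⟨hcase, hcase2⟩
    have h2 : infDist (z n) Y ≤ infDist (γ tstar) Y + dist (z n) (γ tstar) :=
      infDist_le_infDist_add_dist
    rw [hD2def] at hznt
    linarith
  · exfalso
    have hdT : dist (γ tstar) (γ T) = T - tstar := by
      rw [hγ _ htsI T hTT, abs_of_nonpos (by linarith [htsI.2] : tstar - T ≤ 0)]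
      ring
    have hzd : dist (z n) (z iP) ≤ D2 + (T - tstar) := by
      calc dist (z n) (z iP) ≤ dist (z n) (γ tstar) + dist (γ tstar) (z iP) :=
            dist_triangle _ _ _
        _ ≤ D2 + (T - tstar) := by
            rw [← hγT, hdT] at *
            linarith [hznt]
    linarith

end ERhelp

end Helpers5
section Helpers6

open Metric Set

variable {X : Type*} [MetricSpace X] {G : Type*} [Group G] [MulAction G X]

namespace ERhelp

/-- The subgroup of elements commuting with some positive power of `f`. -/
def Eplus {G : Type*} [Group G] (f : G) : Subgroup G where
  carrier := {g : G | ∃ m : ℕ, 0 < m ∧ g * f ^ m * g⁻¹ = f ^ m}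
  one_mem' := ⟨1, one_pos, by simp⟩
  mul_mem' := by
    rintro g₁ g₂ ⟨m₁, hm₁, h₁⟩ ⟨m₂, hm₂, h₂⟩
    have c₁ : Commute g₁ (f ^ m₁) := by
      rw [Commute, SemiconjBy]
      exact mul_inv_eq_iff_eq_mul.mp h₁
    have c₂ : Commute g₂ (f ^ m₂) := by
      rw [Commute, SemiconjBy]
      exact mul_inv_eq_iff_eq_mul.mp h₂
    refine ⟨m₁ * m₂, Nat.mul_pos hm₁ hm₂, ?_⟩
    have c₁' : Commute g₁ (f ^ (m₁ * m₂)) := by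
      rw [pow_mul]; exact c₁.pow_right m₂
    have c₂' : Commute g₂ (f ^ (m₁ * m₂)) := by
      rw [mul_comm m₁ m₂, pow_mul]; exact c₂.pow_right m₁
    have h := c₁'.mul_left c₂'
    rw [mul_inv_eq_iff_eq_mul]
    exact h.eq
  inv_mem' := by
    rintro g ⟨m, hm, h⟩
    have cg : Commute g (f ^ m) := by
      rw [Commute, SemiconjBy]
      exact mul_inv_eq_iff_eq_mul.mp h
    refine ⟨m, hm, ?_⟩
    rw [mul_inv_eq_iff_eq_mul]
    exact (cg.inv_left).eq

/-- The subgroup of elements moving the orbit of `f` a finite Hausdorff distance. -/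
def EHsub (hiso : ∀ g : G, Isometry fun x : X => g • x) (o : X) (f : G) : Subgroup G where
  carrier := {g : G | EMetric.hausdorffEdist (cyclicOrbit f o)
      ((fun x : X => g • x) '' cyclicOrbit f o) ≠ ⊤}
  one_mem' := by
    have : (fun x : X => (1:G) • x) '' cyclicOrbit f o = cyclicOrbit f o := by
      simp [one_smul]
    simp only [Set.mem_setOf_eq, this, EMetric.hausdorffEdist, EMetric.hausdorffEdist_self]
    exact ENNReal.zero_ne_top
  mul_mem' := by
    intro a b ha hb
    simp only [Set.mem_setOf_eq] at ha hb ⊢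
    set Y := cyclicOrbit f o with hY
    have himg : (fun x : X => (a*b) • x) '' Y = (fun x : X => a • x) '' ((fun x : X => b • x) '' Y) := by
      rw [Set.image_image]
      simp only [mul_smul]
    have h2 : EMetric.hausdorffEdist ((fun x : X => a • x) '' Y)
        ((fun x : X => a • x) '' ((fun x : X => b • x) '' Y))
        = EMetric.hausdorffEdist Y ((fun x : X => b • x) '' Y) :=
      EMetric.hausdorffEdist_image (hiso a)
    have htri := EMetric.hausdorffEdist_triangle
      (s := Y) (t := (fun x : X => a • x) '' Y)
      (u := (fun x : X => a • x) '' ((fun x : X => b • x) '' Y))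
    rw [himg]
    exact ne_top_of_le_ne_top (ENNReal.add_ne_top.mpr ⟨ha, by rw [← h2] at hb; exact hb⟩) htri
  inv_mem' := by
    intro a ha
    simp only [Set.mem_setOf_eq] at ha ⊢
    set Y := cyclicOrbit f o with hY
    have h1 : EMetric.hausdorffEdist ((fun x : X => a • x) '' ((fun x : X => a⁻¹ • x) '' Y))
        ((fun x : X => a • x) '' Y)
        = EMetric.hausdorffEdist ((fun x : X => a⁻¹ • x) '' Y) Y :=
      EMetric.hausdorffEdist_image (hiso a)
    have h2 : (fun x : X => a • x) '' ((fun x : X => a⁻¹ • x) '' Y) = Y := by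
      rw [Set.image_image]
      simp [smul_inv_smul]
    rw [h2] at h1
    unfold EMetric.hausdorffEdist at h1 ⊢
    rw [EMetric.hausdorffEdist_comm, ← h1]
    exact ha

/-- Every element of a finite normal subgroup commutes with a positive power of
any element. -/
lemma finite_normal_subset_eplus {N : Subgroup G} (hNn : N.Normal)
    (hNf : (N : Set G).Finite) (f : G) :
    (N : Set G) ⊆ (Eplus f : Set G) := by
  intro n hn
  haveI : Finite (N : Set G) := hNf.to_subtype
  have hmap : ∀ i : ℕ, f ^ i * n * (f ^ i)⁻¹ ∈ N := fun i => hNn.conj_mem n hn (f ^ i)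
  set φ : ℕ → (N : Set G) := fun i => ⟨f ^ i * n * (f ^ i)⁻¹, hmap i⟩ with hφ
  obtain ⟨i, j, hij, heq⟩ := Finite.exists_ne_map_eq_of_infinite φ
  have heq' : f ^ i * n * (f ^ i)⁻¹ = f ^ j * n * (f ^ j)⁻¹ := by
    have := congrArg Subtype.val heq
    simpa [hφ] using this
  have key : ∀ i j : ℕ, i < j → f ^ i * n * (f ^ i)⁻¹ = f ^ j * n * (f ^ j)⁻¹ →
      n ∈ (Eplus f : Set G) := by
    intro i j hlt he
    refine ⟨j - i, Nat.sub_pos_of_lt hlt, ?_⟩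
    have hji : j = i + (j - i) := by omega
    rw [hji, pow_add] at he
    have he2 : n * (f ^ i)⁻¹ = (f ^ (j-i) * n * (f ^ (j-i))⁻¹) * (f ^ i)⁻¹ := by
      have := he
      rw [mul_inv_rev] at this
      -- this : f^i * n * ((f^i)⁻¹) = f^i * f^(j-i) * n * ((f^(j-i))⁻¹ * (f^i)⁻¹)
      have h3 := mul_left_cancel (a := f ^ i)
        (show f ^ i * (n * (f ^ i)⁻¹)
            = f ^ i * (f ^ (j-i) * n * (f ^ (j-i))⁻¹ * (f ^ i)⁻¹) by
          rw [← mul_assoc]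
          rw [this]
          group)
      exact h3
    have h4 : n = f ^ (j-i) * n * (f ^ (j-i))⁻¹ := mul_right_cancel he2
    rw [mul_inv_eq_iff_eq_mul]
    calc n * f ^ (j-i) = (f ^ (j-i) * n * (f ^ (j-i))⁻¹) * f ^ (j-i) := by rw [← h4]
      _ = f ^ (j-i) * n := by group
  rcases lt_or_gt_of_ne hij with h | h
  · exact key i j h heq'
  · exact key j i h heq'.symm

end ERhelp

end Helpers6
section Helpers7

open Metric Set

variable {X : Type*} [MetricSpace X] {G : Type*} [Group G] [MulAction G X]

namespace ERhelp

lemma eplus_mem_ehsub (hiso : ∀ g : G, Isometry fun x : X => g • x) (o : X) (f g : G)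
    (hg : g ∈ Eplus f) : g ∈ EHsub hiso o f := by
  obtain ⟨m, hm, hcomm'⟩ := hg
  have hcomm : Commute g (f ^ m) := by
    rw [Commute, SemiconjBy]
    exact mul_inv_eq_iff_eq_mul.mp hcomm'
  have hrne : (Finset.range m).Nonempty := ⟨0, Finset.mem_range.mpr hm⟩
  set r : ℝ := (Finset.range m).sup' hrne
      (fun s => max (dist ((f ^ (s:ℤ)) • o) (g • o)) (dist o (g • ((f ^ (s:ℤ)) • o))))
    with hrdef
  have hdecomp : ∀ i : ℤ, ∃ (qq : ℤ) (s : ℕ), s < m ∧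
      (f ^ i) • o = (f ^ ((m:ℤ) * qq)) • ((f ^ (s:ℤ)) • o) ∧
      g • ((f ^ i) • o) = (f ^ ((m:ℤ)*qq)) • (g • ((f ^ (s:ℤ)) • o)) ∧
      g • ((f ^ ((m:ℤ)*qq)) • o) = (f ^ ((m:ℤ)*qq)) • (g • o) := by
    intro i
    have hmz : ((m:ℤ)) ≠ 0 := by exact_mod_cast hm.ne'
    have hmod0 : 0 ≤ i % (m:ℤ) := Int.emod_nonneg i hmz
    have hmodlt : i % (m:ℤ) < (m:ℤ) := Int.emod_lt_of_pos i (by exact_mod_cast hm)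
    have hs : (((i % (m:ℤ)).toNat : ℕ) : ℤ) = i % (m:ℤ) := Int.toNat_of_nonneg hmod0
    have hdiv : (m:ℤ) * (i / (m:ℤ)) + i % (m:ℤ) = i := by linarith [Int.emod_add_mul_ediv i (m:ℤ), Int.mul_ediv_add_emod i (m:ℤ)]
    have hfi : f ^ i = f ^ ((m:ℤ) * (i / (m:ℤ))) * f ^ ((((i % (m:ℤ)).toNat : ℕ)):ℤ) := by
      rw [← zpow_add]
      congr 1
      rw [hs]
      linarith
    have hzc : f ^ ((m:ℤ) * (i / (m:ℤ))) = (f ^ m : G) ^ (i / (m:ℤ)) := by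
      rw [zpow_mul, zpow_natCast]
    have hcg : Commute g (f ^ ((m:ℤ) * (i / (m:ℤ)))) := by
      rw [hzc]
      exact hcomm.zpow_right _
    refine ⟨i / (m:ℤ), (i % (m:ℤ)).toNat, by omega, ?_, ?_, ?_⟩
    · rw [hfi, mul_smul]
    · rw [hfi, mul_smul, ← mul_smul, hcg.eq, mul_smul]
    · rw [← mul_smul, hcg.eq, mul_smul]
  have hbound : ∀ s : ℕ, s < m →
      max (dist ((f ^ (s:ℤ)) • o) (g • o)) (dist o (g • ((f ^ (s:ℤ)) • o))) ≤ r :=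
    fun s hs => by
      rw [hrdef]
      exact Finset.le_sup'
        (fun s : ℕ => max (dist ((f ^ (s:ℤ)) • o) (g • o)) (dist o (g • ((f ^ (s:ℤ)) • o))))
        (Finset.mem_range.mpr hs)
  have hfin : EMetric.hausdorffEdist (cyclicOrbit f o)
      ((fun x : X => g • x) '' cyclicOrbit f o) ≤ ENNReal.ofReal r := by
    apply EMetric.hausdorffEdist_le_of_infEdist
    · rintro x ⟨i, rfl⟩
      beta_reduce
      obtain ⟨qq, s, hsm, h1, h2, h3⟩ := hdecomp i
      have hmem : g • ((f ^ ((m:ℤ)*qq)) • o) ∈ (fun x : X => g • x) '' cyclicOrbit f o :=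
        Set.mem_image_of_mem _ ⟨(m:ℤ)*qq, rfl⟩
      refine le_trans (EMetric.infEdist_le_edist_of_mem hmem) ?_
      rw [edist_dist]
      apply ENNReal.ofReal_le_ofReal
      rw [h1, h3, (hiso (f ^ ((m:ℤ)*qq))).dist_eq]
      exact le_trans (le_max_left _ _) (hbound s hsm)
    · rintro x ⟨y, ⟨i, rfl⟩, rfl⟩
      beta_reduce
      obtain ⟨qq, s, hsm, h1, h2, h3⟩ := hdecomp i
      have hmem : (f ^ ((m:ℤ)*qq)) • o ∈ cyclicOrbit f o := ⟨(m:ℤ)*qq, rfl⟩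
      refine le_trans (EMetric.infEdist_le_edist_of_mem hmem) ?_
      rw [edist_dist]
      apply ENNReal.ofReal_le_ofReal
      rw [h2, (hiso (f ^ ((m:ℤ)*qq))).dist_eq, dist_comm]
      exact le_trans (le_max_right _ _) (hbound s hsm)
  exact ne_top_of_le_ne_top ENNReal.ofReal_ne_top hfin

lemma isContractingElement_conj [ProperSpace X]
    (hiso : ∀ g : G, Isometry fun x : X => g • x) (hgeo : GeodesicSpace X) (o : X)
    {f : G} (hf : IsContractingElement o f) (a : G) :
    IsContractingElement o (a * f * a⁻¹) := by
  obtain ⟨⟨C, hC, hcon⟩, K, c, hK, hc, hqi⟩ := hf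
  set B : ℝ := dist (a⁻¹ • o) o with hB
  have hB0 : 0 ≤ B := dist_nonneg
  have horb := cyclicOrbit_conj a f o
  set W : Set X := Set.range (fun n : ℤ => (f ^ n) • (a⁻¹ • o)) with hW
  have hWY1 : ∀ w ∈ W, infDist w (cyclicOrbit f o) ≤ B := by
    rintro w ⟨n, rfl⟩
    have hd : dist ((f^n) • (a⁻¹ • o)) ((f^n) • o) = B := (hiso (f^n)).dist_eq _ _
    exact le_trans (infDist_le_dist_of_mem ⟨n, rfl⟩) (le_of_eq hd)
  have hWY2 : ∀ y ∈ cyclicOrbit f o, infDist y W ≤ B := by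
    rintro y ⟨n, rfl⟩
    have hd : dist ((f^n) • o) ((f^n) • (a⁻¹ • o)) = B := by
      rw [(hiso (f^n)).dist_eq, dist_comm]
    exact le_trans (infDist_le_dist_of_mem ⟨n, rfl⟩) (le_of_eq hd)
  have hYne := cyclicOrbit_nonempty f o
  have hWcon : IsContractingWith (7*C + 6*B + 10) W :=
    contracting_perturb hgeo hC hB0 hYne hcon hWY1 hWY2
  constructor
  · refine ⟨7*C + 6*B + 10, by linarith, ?_⟩
    rw [horb]
    exact isContractingWith_smul hiso a hWcon
  · refine ⟨K, c + 2*B, hK, by linarith, fun p q => ?_⟩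
    have he : ∀ p : ℤ, ((a*f*a⁻¹) ^ p) • o = a • ((f ^ p) • (a⁻¹ • o)) := by
      intro p
      rw [conj_zpow, mul_smul, mul_smul]
    rw [he p, he q, (hiso a).dist_eq]
    have h1 := hqi p q
    have e1 : dist ((f^p) • (a⁻¹ • o)) ((f^p) • o) = B := (hiso (f^p)).dist_eq _ _
    have e2 : dist ((f^q) • (a⁻¹ • o)) ((f^q) • o) = B := (hiso (f^q)).dist_eq _ _
    have hup : dist ((f^p) • (a⁻¹ • o)) ((f^q) • (a⁻¹ • o)) ≤
        dist ((f^p) • o) ((f^q) • o) + 2*B := by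
      have t1 := dist_triangle ((f^p) • (a⁻¹ • o)) ((f^p) • o) ((f^q) • (a⁻¹ • o))
      have t2 := dist_triangle ((f^p) • o) ((f^q) • o) ((f^q) • (a⁻¹ • o))
      have e2' : dist ((f^q) • o) ((f^q) • (a⁻¹ • o)) = B := by rw [dist_comm]; exact e2
      linarith
    have hlo : dist ((f^p) • o) ((f^q) • o) ≤
        dist ((f^p) • (a⁻¹ • o)) ((f^q) • (a⁻¹ • o)) + 2*B := by
      have t1 := dist_triangle ((f^p) • o) ((f^p) • (a⁻¹ • o)) ((f^q) • o)
      have t2 := dist_triangle ((f^p) • (a⁻¹ • o)) ((f^q) • (a⁻¹ • o)) ((f^q) • o)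
      have e1' : dist ((f^p) • o) ((f^p) • (a⁻¹ • o)) = B := by rw [dist_comm]; exact e1
      have e2'' : dist ((f^q) • (a⁻¹ • o)) ((f^q) • o) = B := e2
      linarith
    exact ⟨by linarith [h1.1], by linarith [h1.2]⟩

end ERhelp

end Helpers7

set_option maxHeartbeats 1000000 in
/-- existence of the elliptic radical: a unique maximal finite normal
subgroup `E(G)`, which equals `⋂_f E(f)` and also `⋂_f E⁺(f)` over all contracting
elements `f`. -/
theorem elliptic_radical {G X : Type*} [Group G]
    [MetricSpace X] [ProperSpace X] [MulAction G X]
    (hiso : ∀ g : G, Isometry fun x : X => g • x)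
    (hgeo : GeodesicSpace X) (o : X)
    (hproper : ∀ (x : X) (r : ℝ), {g : G | dist x (g • x) ≤ r}.Finite)
    (hcp : ContractingProperty G X o) :
    ∃ E : Subgroup G, E.Normal ∧ (E : Set G).Finite ∧
      (∀ N : Subgroup G, N.Normal → (N : Set G).Finite → N ≤ E) ∧
      (∀ E' : Subgroup G, E'.Normal → (E' : Set G).Finite →
        (∀ N : Subgroup G, N.Normal → (N : Set G).Finite → N ≤ E') → E' = E) ∧
      ((E : Set G) = ⋂ f ∈ {f : G | IsContractingElement o f},
        {g : G | EMetric.hausdorffEdist (cyclicOrbit f o)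
          ((fun x : X => g • x) '' cyclicOrbit f o) ≠ ⊤}) ∧
      ((E : Set G) = ⋂ f ∈ {f : G | IsContractingElement o f},
        {g : G | ∃ m : ℕ, 0 < m ∧ g * f ^ m * g⁻¹ = f ^ m}) := by
  classical
  open Metric Set ERhelp in
  obtain ⟨g₀, h₀, hg₀, hh₀, hWI⟩ := hcp
  set CE : Set G := {f : G | IsContractingElement o f} with hCE
  set Kgrp : Subgroup G := ⨅ (f : G) (_ : f ∈ CE), ERhelp.Eplus f with hKgrp
  set Mgrp : Subgroup G := ⨅ (f : G) (_ : f ∈ CE), ERhelp.EHsub hiso o f with hMgrp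
  have hmemK : ∀ x : G, x ∈ Kgrp ↔ ∀ f ∈ CE, x ∈ ERhelp.Eplus f := by
    intro x
    rw [hKgrp]
    simp [Subgroup.mem_iInf]
  have hmemM : ∀ x : G, x ∈ Mgrp ↔ ∀ f ∈ CE, x ∈ ERhelp.EHsub hiso o f := by
    intro x
    rw [hMgrp]
    simp [Subgroup.mem_iInf]
  have hCEconj : ∀ f ∈ CE, ∀ a : G, a * f * a⁻¹ ∈ CE := fun f hf a =>
    ERhelp.isContractingElement_conj hiso hgeo o hf a
  -- K ⊆ M
  have hKM : ∀ x ∈ Kgrp, x ∈ Mgrp := by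
    intro x hx
    rw [hmemM]
    intro f hf
    exact ERhelp.eplus_mem_ehsub hiso o f x ((hmemK x).mp hx f hf)
  -- K is normal
  have hKnormal : Kgrp.Normal := by
    constructor
    intro k hk h
    rw [hmemK]
    intro f hf
    have hf' : h⁻¹ * f * h ∈ CE := by
      have := hCEconj f hf h⁻¹
      rwa [inv_inv] at this
    obtain ⟨m, hm, hcm⟩ := (hmemK k).mp hk _ hf'
    refine ⟨m, hm, ?_⟩
    have h2 : (h⁻¹ * f * h) ^ m = h⁻¹ * f ^ m * h := by
      have he : h⁻¹ * f * h = h⁻¹ * f * h⁻¹⁻¹ := by rw [inv_inv]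
      rw [he, conj_pow, inv_inv]
    rw [h2] at hcm
    have h3 : h * (k * (h⁻¹ * f ^ m * h) * k⁻¹) * h⁻¹ = h * (h⁻¹ * f ^ m * h) * h⁻¹ :=
      congrArg (fun x => h * x * h⁻¹) hcm
    calc h * k * h⁻¹ * f ^ m * (h * k * h⁻¹)⁻¹
        = h * (k * (h⁻¹ * f ^ m * h) * k⁻¹) * h⁻¹ := by group
      _ = h * (h⁻¹ * f ^ m * h) * h⁻¹ := h3
      _ = f ^ m := by group
  -- M is normal
  have hMnormal : Mgrp.Normal := by
    constructor
    intro k hk h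
    rw [hmemM]
    intro f hf
    have hf' : h⁻¹ * f * h ∈ CE := by
      have := hCEconj f hf h⁻¹
      rwa [inv_inv] at this
    have hk' := (hmemM k).mp hk _ hf'
    show EMetric.hausdorffEdist (cyclicOrbit f o)
      ((fun x : X => (h * k * h⁻¹) • x) '' cyclicOrbit f o) ≠ ⊤
    have hYne : (cyclicOrbit f o).Nonempty := ERhelp.cyclicOrbit_nonempty f o
    have hWne : (Set.range (fun n : ℤ => (f ^ n) • (h • o))).Nonempty :=
      ⟨(f ^ (0:ℤ)) • (h • o), 0, rfl⟩
    have hYW : EMetric.hausdorffEdist (cyclicOrbit f o)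
        (Set.range (fun n : ℤ => (f ^ n) • (h • o))) ≠ ⊤ := by
      apply ERhelp.hausdorffEdist_ne_top_of_pointwise (r := dist o (h • o)) hYne hWne
      · rintro x ⟨n, rfl⟩
        have hd : dist ((f^n) • o) ((f^n) • (h • o)) = dist o (h • o) :=
          (hiso (f^n)).dist_eq _ _
        exact le_trans (infDist_le_dist_of_mem ⟨n, rfl⟩) (le_of_eq hd)
      · rintro y ⟨n, rfl⟩
        have hd : dist ((f^n) • (h • o)) ((f^n) • o) = dist (h • o) o :=
          (hiso (f^n)).dist_eq _ _
        refine le_trans (infDist_le_dist_of_mem ⟨n, rfl⟩) ?_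
        rw [hd, dist_comm]
    have horb : cyclicOrbit (h⁻¹ * f * h) o
        = (fun x : X => h⁻¹ • x) '' Set.range (fun n : ℤ => (f ^ n) • (h • o)) := by
      have := ERhelp.cyclicOrbit_conj h⁻¹ f o
      rwa [inv_inv] at this
    have hk'' : EMetric.hausdorffEdist
        ((fun x : X => h⁻¹ • x) '' Set.range (fun n : ℤ => (f ^ n) • (h • o)))
        ((fun x : X => k • x) ''
          ((fun x : X => h⁻¹ • x) '' Set.range (fun n : ℤ => (f ^ n) • (h • o)))) ≠ ⊤ := by
      rw [← horb]
      exact hk'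
    have hWQ : EMetric.hausdorffEdist (Set.range (fun n : ℤ => (f ^ n) • (h • o)))
        ((fun x : X => (h*k*h⁻¹) • x) '' Set.range (fun n : ℤ => (f ^ n) • (h • o))) ≠ ⊤ := by
      have himg := EMetric.hausdorffEdist_image (Φ := fun x : X => h • x)
        (s := (fun x : X => h⁻¹ • x) '' Set.range (fun n : ℤ => (f ^ n) • (h • o)))
        (t := (fun x : X => k • x) ''
          ((fun x : X => h⁻¹ • x) '' Set.range (fun n : ℤ => (f ^ n) • (h • o)))) (hiso h)
      have e1 : (fun x : X => h • x) ''
          ((fun x : X => h⁻¹ • x) '' Set.range (fun n : ℤ => (f ^ n) • (h • o)))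
          = Set.range (fun n : ℤ => (f ^ n) • (h • o)) := by
        rw [Set.image_image]
        simp [smul_inv_smul]
      have e2 : (fun x : X => h • x) '' ((fun x : X => k • x) ''
          ((fun x : X => h⁻¹ • x) '' Set.range (fun n : ℤ => (f ^ n) • (h • o))))
          = (fun x : X => (h*k*h⁻¹) • x) '' Set.range (fun n : ℤ => (f ^ n) • (h • o)) := by
        rw [Set.image_image, Set.image_image]
        simp only [mul_smul]
      rw [e1, e2] at himg
      unfold EMetric.hausdorffEdist
      rw [himg]
      exact hk''
    have hQQ' : EMetric.hausdorffEdist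
        ((fun x : X => (h*k*h⁻¹) • x) '' Set.range (fun n : ℤ => (f ^ n) • (h • o)))
        ((fun x : X => (h*k*h⁻¹) • x) '' cyclicOrbit f o) ≠ ⊤ := by
      unfold EMetric.hausdorffEdist
      rw [EMetric.hausdorffEdist_image (hiso (h*k*h⁻¹)), EMetric.hausdorffEdist_comm]
      exact hYW
    have t1 := EMetric.hausdorffEdist_triangle (s := cyclicOrbit f o)
      (t := Set.range (fun n : ℤ => (f ^ n) • (h • o)))
      (u := (fun x : X => (h*k*h⁻¹) • x) '' cyclicOrbit f o)
    have t2 := EMetric.hausdorffEdist_triangle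
      (s := Set.range (fun n : ℤ => (f ^ n) • (h • o)))
      (t := (fun x : X => (h*k*h⁻¹) • x) '' Set.range (fun n : ℤ => (f ^ n) • (h • o)))
      (u := (fun x : X => (h*k*h⁻¹) • x) '' cyclicOrbit f o)
    exact ne_top_of_le_ne_top
      (ENNReal.add_ne_top.mpr ⟨hYW, ENNReal.add_ne_top.mpr ⟨hWQ, hQQ'⟩⟩)
      (le_trans t1 (add_le_add le_rfl t2))
  -- uniform closeness of M-orbit points to contracting orbits
  have hτ : ∀ f : G, f ∈ CE → ∃ τ : ℝ, 0 ≤ τ ∧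
      ∀ k : G, k ∈ Mgrp → infDist (k • o) (cyclicOrbit f o) ≤ τ := by
    intro f hfce
    have hfmem := hfce
    obtain ⟨⟨C, hC, hcon⟩, Kq, c, hK, hc, hqi⟩ := hfce
    refine ⟨Kq * (Kq * (8*C + 11 + c)) + c + 4*C + 5 + (4*C + 4), ?_, ?_⟩
    · have h1 : (0:ℝ) ≤ Kq*(8*C+11+c) := mul_nonneg (by linarith) (by linarith)
      have h2 : (0:ℝ) ≤ Kq * (Kq*(8*C+11+c)) := mul_nonneg (by linarith) h1
      linarith
    · intro k hk
      have hkEH := (hmemM k).mp hk f hfmem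
      have hfinHD : EMetric.hausdorffEdist
          ((fun x : X => k • x) '' cyclicOrbit f o) (cyclicOrbit f o) ≠ ⊤ := by
        unfold EMetric.hausdorffEdist
        rw [EMetric.hausdorffEdist_comm]
        exact hkEH
      have hr0 : 0 ≤ Metric.hausdorffDist
          ((fun x : X => k • x) '' cyclicOrbit f o) (cyclicOrbit f o) :=
        Metric.hausdorffDist_nonneg
      have hzY : ∀ i : ℤ, infDist (k • ((f ^ i) • o)) (cyclicOrbit f o) ≤
          Metric.hausdorffDist ((fun x : X => k • x) '' cyclicOrbit f o) (cyclicOrbit f o) := by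
        intro i
        exact Metric.infDist_le_hausdorffDist_of_mem
          (Set.mem_image_of_mem _ ⟨i, rfl⟩) hfinHD
      have hrange : Set.range (fun i : ℤ => k • ((f ^ i) • o))
          = (fun x : X => k • x) '' cyclicOrbit f o :=
        (ERhelp.smul_image_cyclicOrbit k f o).symm
      have hconZ : IsContractingWith C (Set.range (fun i : ℤ => k • ((f ^ i) • o))) := by
        rw [hrange]
        exact ERhelp.isContractingWith_smul hiso k hcon
      have hlow' : ∀ i j : ℤ, |(i:ℝ)-(j:ℝ)|/Kq - c ≤ dist (k • ((f ^ i) • o)) (k • ((f ^ j) • o)) := by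
        intro i j
        rw [(hiso k).dist_eq]
        exact (hqi i j).1
      have hupp' : ∀ i j : ℤ, dist (k • ((f ^ i) • o)) (k • ((f ^ j) • o)) ≤ Kq * |(i:ℝ)-(j:ℝ)| + c := by
        intro i j
        rw [(hiso k).dist_eq]
        exact (hqi i j).2
      have := ERhelp.quasi_line_close hgeo hC hK hc hr0
        (ERhelp.cyclicOrbit_nonempty f o) hcon hlow' hupp' hconZ hzY 0
      simpa using this
  obtain ⟨τg, hτg0, hτg⟩ := hτ g₀ hg₀
  obtain ⟨τh, hτh0, hτh⟩ := hτ h₀ hh₀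
  obtain ⟨R, hR⟩ := hWI
  -- M is finite
  have hMfin : (Mgrp : Set G).Finite := by
    apply Set.Finite.subset (hproper o (R (max τg τh)))
    intro k hk
    show dist o (k • o) ≤ R (max τg τh)
    have hρ0 : (0:ℝ) ≤ max τg τh := le_trans hτg0 (le_max_left _ _)
    have ho1 : infDist o (cyclicOrbit g₀ o) ≤ max τg τh := by
      have hm : o ∈ cyclicOrbit g₀ o := ⟨0, by simp⟩
      have := infDist_le_dist_of_mem (x := o) hm
      rw [dist_self] at this
      linarith
    have ho2 : infDist o (cyclicOrbit h₀ o) ≤ max τg τh := by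
      have hm : o ∈ cyclicOrbit h₀ o := ⟨0, by simp⟩
      have := infDist_le_dist_of_mem (x := o) hm
      rw [dist_self] at this
      linarith
    have h1 : infDist (k • o) (cyclicOrbit g₀ o) ≤ max τg τh :=
      le_trans (hτg k hk) (le_max_left _ _)
    have h2 : infDist (k • o) (cyclicOrbit h₀ o) ≤ max τg τh :=
      le_trans (hτh k hk) (le_max_right _ _)
    exact hR (max τg τh) hρ0 o ⟨ho1, ho2⟩ (k • o) ⟨h1, h2⟩
  -- M ≤ K
  have hMK : ∀ x ∈ Mgrp, x ∈ Kgrp := by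
    intro x hx
    rw [hmemK]
    intro f hf
    exact ERhelp.finite_normal_subset_eplus hMnormal hMfin f hx
  have hsetKM : (Kgrp : Set G) = (Mgrp : Set G) :=
    Set.Subset.antisymm (fun x hx => hKM x hx) (fun x hx => hMK x hx)
  have hKfin : (Kgrp : Set G).Finite := hsetKM ▸ hMfin
  have hmaxK : ∀ N : Subgroup G, N.Normal → (N : Set G).Finite → N ≤ Kgrp := by
    intro N hNn hNf x hx
    rw [hmemK]
    intro f hf
    exact ERhelp.finite_normal_subset_eplus hNn hNf f hx
  refine ⟨Kgrp, hKnormal, hKfin, hmaxK, ?_, ?_, ?_⟩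
  · intro E' hE'n hE'f hE'max
    exact le_antisymm (hmaxK E' hE'n hE'f) (hE'max Kgrp hKnormal hKfin)
  · rw [hsetKM]
    ext x
    simp only [SetLike.mem_coe, Set.mem_iInter, Set.mem_setOf_eq]
    rw [hmemM]
    constructor
    · intro hx f hf
      exact hx f hf
    · intro hx f hf
      exact hx f hf
  · ext x
    simp only [SetLike.mem_coe, Set.mem_iInter, Set.mem_setOf_eq]
    rw [hmemK]
    constructor
    · intro hx f hf
      exact hx f hf
    · intro hx f hf
      exact hx f hf
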